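/- Let f, g : Ω → [0,∞] be measurable functions on Ω ⊆ ℝ^N. Then ∫_Ω f g dx ≤ ∫_0^{μ(Ω)} f*(t) g*(t) dt, where f*, g* are the decreasing rearrangements of f and g. -/

import Mathlib

open MeasureTheory ENNReal

/-- The decreasing rearrangement of a nonnegative measurable function,
`f*(t) = inf { s : μ{f > s} < t }`. -/
noncomputable def decRearr {α : Type*} [MeasurableSpace α] (μ : Measure α)
    (f : α → ℝ≥0∞) (t : ℝ) : ℝ≥0∞ :=
  sInf {s : ℝ≥0∞ | μ {x | s < f x} < ENNReal.ofReal t}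

lemma meas_band (r : ℝ≥0∞) : volume {a : ℝ | 0 < a ∧ ENNReal.ofReal a < r} = r := by
  rcases eq_or_ne r ∞ with h | h
  · subst h
    have h1 : {a : ℝ | 0 < a ∧ ENNReal.ofReal a < ∞} = Set.Ioi 0 := by
      ext a; simp [ENNReal.ofReal_lt_top]
    rw [h1, Real.volume_Ioi]
  · have h1 : {a : ℝ | 0 < a ∧ ENNReal.ofReal a < r} = Set.Ioo 0 r.toReal := by
      ext a
      simp only [Set.mem_setOf_eq, Set.mem_Ioo, and_congr_right_iff]
      intro ha
      rw [ENNReal.ofReal_lt_iff_lt_toReal ha.le h]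
    rw [h1, Real.volume_Ioo, sub_zero, ENNReal.ofReal_toReal h]

lemma decRearr_antitone {α : Type*} [MeasurableSpace α] (ν : Measure α)
    (F : α → ℝ≥0∞) : Antitone (decRearr ν F) := by
  intro t t' h
  apply sInf_le_sInf
  intro s hs
  exact lt_of_lt_of_le hs (ENNReal.ofReal_le_ofReal h)

lemma lt_decRearr {α : Type*} [MeasurableSpace α] (ν : Measure α) (F : α → ℝ≥0∞)
    (c : ℝ≥0∞) {t : ℝ} (h : ENNReal.ofReal t < ν {x | c < F x}) :
    c < decRearr ν F t := by
  by_contra hc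
  push_neg at hc
  have hctop : c ≠ ∞ := by
    intro hceq
    subst hceq
    have : {x | (∞ : ℝ≥0∞) < F x} = ∅ := by
      ext x; simp [not_top_lt]
    rw [this] at h
    simp at h
  -- every s > c satisfies ν {x | s < F x} < ofReal t
  have claim : ∀ s : ℝ≥0∞, c < s → ν {x | s < F x} < ENNReal.ofReal t := by
    intro s hs
    have h1 : sInf {s : ℝ≥0∞ | ν {x | s < F x} < ENNReal.ofReal t} < s :=
      lt_of_le_of_lt hc hs
    obtain ⟨s0, hs0, hs0s⟩ := sInf_lt_iff.mp h1
    exact lt_of_le_of_lt (measure_mono fun x hx => lt_trans hs0s hx) hs0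
  -- {x | c < F x} = ⋃ n, {x | c + (n : ℝ≥0∞)⁻¹ < F x}
  have hunion : {x | c < F x} = ⋃ n : ℕ, {x | c + (n : ℝ≥0∞)⁻¹ < F x} := by
    ext x
    simp only [Set.mem_setOf_eq, Set.mem_iUnion]
    constructor
    · intro hx
      obtain ⟨r, hr, hrlt⟩ := (ENNReal.lt_iff_exists_add_pos_lt).mp hx
      obtain ⟨n, hn⟩ := ENNReal.exists_inv_nat_lt (by exact_mod_cast hr.ne' : (r : ℝ≥0∞) ≠ 0)
      exact ⟨n, lt_trans (ENNReal.add_lt_add_left hctop hn) hrlt⟩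
    · rintro ⟨n, hn⟩
      exact lt_of_le_of_lt le_self_add hn
  have hmono : Monotone (fun n : ℕ => {x | c + (n : ℝ≥0∞)⁻¹ < F x}) := by
    intro n m hnm x hx
    refine lt_of_le_of_lt (add_le_add le_rfl ?_) (show c + (n : ℝ≥0∞)⁻¹ < F x from hx)
    exact ENNReal.inv_le_inv.mpr (by exact_mod_cast hnm)
  have hle : ν {x | c < F x} ≤ ENNReal.ofReal t := by
    rw [hunion]
    calc ν (⋃ n : ℕ, {x | c + (n : ℝ≥0∞)⁻¹ < F x})
        = ⨆ n : ℕ, ν {x | c + (n : ℝ≥0∞)⁻¹ < F x} :=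
          Directed.measure_iUnion hmono.directed_le
      _ ≤ ENNReal.ofReal t := by
          apply iSup_le
          intro n
          refine (claim _ ?_).le
          exact ENNReal.lt_add_right hctop (by simp)
  exact absurd h (not_lt.mpr hle)

lemma layer_once {α : Type*} [MeasurableSpace α] (ν : Measure α) [SFinite ν]
    {F H : α → ℝ≥0∞} (hF : Measurable F) (hH : Measurable H) :
    ∫⁻ x, F x * H x ∂ν
      = ∫⁻ a in Set.Ioi (0:ℝ), ∫⁻ x, (if ENNReal.ofReal a < F x then H x else 0) ∂ν := by
  have key : ∀ x, F x * H x
      = ∫⁻ a in Set.Ioi (0:ℝ), (if ENNReal.ofReal a < F x then H x else 0) := by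
    intro x
    have hset : MeasurableSet {a : ℝ | ENNReal.ofReal a < F x} :=
      measurableSet_lt ENNReal.measurable_ofReal measurable_const
    have h1 : (fun a : ℝ => if ENNReal.ofReal a < F x then H x else 0)
        = {a : ℝ | ENNReal.ofReal a < F x}.indicator (fun _ => H x) := by
      ext a
      simp [Set.indicator_apply, Set.mem_setOf_eq]
    rw [h1, lintegral_indicator hset, setLIntegral_const, Measure.restrict_apply hset]
    have h2 : {a : ℝ | ENNReal.ofReal a < F x} ∩ Set.Ioi 0
        = {a : ℝ | 0 < a ∧ ENNReal.ofReal a < F x} := by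
      ext a; simp [and_comm, Set.mem_Ioi]
    rw [h2, meas_band, mul_comm]
  rw [lintegral_congr key]
  apply lintegral_lintegral_swap
  apply Measurable.aemeasurable
  apply Measurable.ite
  · exact measurableSet_lt (ENNReal.measurable_ofReal.comp measurable_snd)
      (hF.comp measurable_fst)
  · exact hH.comp measurable_fst
  · exact measurable_const

lemma layer_twice {α : Type*} [MeasurableSpace α] (ν : Measure α) [SFinite ν]
    {F G : α → ℝ≥0∞} (hF : Measurable F) (hG : Measurable G) :
    ∫⁻ x, F x * G x ∂ν
      = ∫⁻ a in Set.Ioi (0:ℝ), ∫⁻ b in Set.Ioi (0:ℝ),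
          ν ({x | ENNReal.ofReal b < G x} ∩ {x | ENNReal.ofReal a < F x}) := by
  rw [layer_once ν hF hG]
  apply setLIntegral_congr_fun measurableSet_Ioi
  intro a _
  beta_reduce
  have hsetF : MeasurableSet {x | ENNReal.ofReal a < F x} :=
    measurableSet_lt measurable_const hF
  have h1 : ∀ x, (if ENNReal.ofReal a < F x then G x else 0)
      = G x * ({x | ENNReal.ofReal a < F x}.indicator (fun _ => (1:ℝ≥0∞)) x) := by
    intro x
    simp only [Set.indicator_apply, Set.mem_setOf_eq]
    split <;> simp
  rw [lintegral_congr h1, layer_once ν hG (Measurable.indicator measurable_const hsetF)]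
  apply setLIntegral_congr_fun measurableSet_Ioi
  intro b _
  beta_reduce
  have hsetG : MeasurableSet {x | ENNReal.ofReal b < G x} :=
    measurableSet_lt measurable_const hG
  have h2 : ∀ x, (if ENNReal.ofReal b < G x
        then ({x | ENNReal.ofReal a < F x}.indicator (fun _ => (1:ℝ≥0∞)) x) else 0)
      = ({x | ENNReal.ofReal b < G x} ∩ {x | ENNReal.ofReal a < F x}).indicator
          (fun _ => (1:ℝ≥0∞)) x := by
    intro x
    by_cases hb : ENNReal.ofReal b < G x <;> by_cases ha : ENNReal.ofReal a < F x <;>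
      simp [Set.indicator_apply, hb, ha]
  rw [lintegral_congr h2, lintegral_indicator (hsetG.inter hsetF), setLIntegral_const,
    one_mul]

theorem hardy_littlewood_rearrangement (N : ℕ)
    (Ω : Set (EuclideanSpace ℝ (Fin N))) (hΩ : MeasurableSet Ω)
    (f g : EuclideanSpace ℝ (Fin N) → ℝ≥0∞)
    (hf : Measurable f) (hg : Measurable g) :
    (∫⁻ x in Ω, f x * g x) ≤
      ∫⁻ t in {t : ℝ | 0 < t ∧ ENNReal.ofReal t ≤ volume Ω},
        decRearr (volume.restrict Ω) f t * decRearr (volume.restrict Ω) g t := by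
  set μ := volume.restrict Ω with hμ
  set S : Set ℝ := {t : ℝ | 0 < t ∧ ENNReal.ofReal t ≤ volume Ω} with hS
  have hSmeas : MeasurableSet S := by
    apply MeasurableSet.inter
    · exact measurableSet_Ioi
    · exact ENNReal.measurable_ofReal (measurableSet_Iic)
  set fs := decRearr μ f with hfs
  set gs := decRearr μ g with hgs
  have hfsm : Measurable fs := (decRearr_antitone μ f).measurable
  have hgsm : Measurable gs := (decRearr_antitone μ g).measurable
  rw [show (∫⁻ x in Ω, f x * g x) = ∫⁻ x, f x * g x ∂μ from rfl,
    layer_twice μ hf hg,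
    show (∫⁻ t in S, fs t * gs t) = ∫⁻ t, fs t * gs t ∂(volume.restrict S) from rfl,
    layer_twice (volume.restrict S) hfsm hgsm]
  apply lintegral_mono
  intro a
  apply lintegral_mono
  intro b
  -- key pointwise bound
  have hμf : μ {x | ENNReal.ofReal a < f x} ≤ volume Ω := by
    calc μ {x | ENNReal.ofReal a < f x} ≤ μ Set.univ := measure_mono (Set.subset_univ _)
      _ = volume Ω := by rw [hμ, Measure.restrict_apply_univ]
  set m := min (μ {x | ENNReal.ofReal a < f x}) (μ {x | ENNReal.ofReal b < g x}) with hm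
  have h1 : μ ({x | ENNReal.ofReal b < g x} ∩ {x | ENNReal.ofReal a < f x}) ≤ m :=
    le_min (measure_mono Set.inter_subset_right) (measure_mono Set.inter_subset_left)
  refine h1.trans ?_
  have hsetf : MeasurableSet {t : ℝ | ENNReal.ofReal a < fs t} :=
    measurableSet_lt measurable_const hfsm
  have hsetg : MeasurableSet {t : ℝ | ENNReal.ofReal b < gs t} :=
    measurableSet_lt measurable_const hgsm
  calc m = volume {t : ℝ | 0 < t ∧ ENNReal.ofReal t < m} := (meas_band m).symm
    _ ≤ volume (({t : ℝ | ENNReal.ofReal b < gs t} ∩ {t : ℝ | ENNReal.ofReal a < fs t}) ∩ S) := by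
        apply measure_mono
        rintro t ⟨ht0, htm⟩
        have htf : ENNReal.ofReal t < μ {x | ENNReal.ofReal a < f x} :=
          htm.trans_le (min_le_left _ _)
        have htg : ENNReal.ofReal t < μ {x | ENNReal.ofReal b < g x} :=
          htm.trans_le (min_le_right _ _)
        refine ⟨⟨lt_decRearr μ g _ htg, lt_decRearr μ f _ htf⟩, ht0, htf.le.trans hμf⟩
    _ = (volume.restrict S) ({t : ℝ | ENNReal.ofReal b < gs t} ∩ {t : ℝ | ENNReal.ofReal a < fs t}) :=
        (Measure.restrict_apply (hsetg.inter hsetf)).symm
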